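/- Let y be an indeterminate, u a parameter, and define the operator D = (y^3/(1-uy)) · ∂/∂y acting on formal Laurent series in u with rational-function coefficients in y. Then for every integer i ≥ 1, applying D i times to y/(1-uy) yields (2i-1)!! · (y/(1-uy))^{2i+1}. -/

import Mathlib

/- We work with formal power series in `u` whose coefficients are polynomials
(in particular rational functions) in `y`.  The series
`Y(u) = y/(1-uy) = ∑_{k≥0} y^{k+1} u^k` and `y^3/(1-uy) = ∑_{k≥0} y^{k+3} u^k`
are represented by their expansions. -/

/-- `Y(u) = y/(1-uy) = ∑_{k≥0} y^{k+1} u^k`. -/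
noncomputable def Yu : PowerSeries (Polynomial ℚ) :=
  PowerSeries.mk fun k => Polynomial.X ^ (k + 1)

/-- The partial derivative `∂/∂y`, acting coefficientwise in `u`. -/
noncomputable def dYpartial (f : PowerSeries (Polynomial ℚ)) :
    PowerSeries (Polynomial ℚ) :=
  PowerSeries.mk fun k => Polynomial.derivative (PowerSeries.coeff k f)

/-- The operator `D = (y^3/(1-uy)) · ∂/∂y`, where
`y^3/(1-uy) = ∑_{k≥0} y^{k+3} u^k`. -/
noncomputable def Dop (f : PowerSeries (Polynomial ℚ)) :
    PowerSeries (Polynomial ℚ) :=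
  (PowerSeries.mk fun k => Polynomial.X ^ (k + 3)) * dYpartial f

lemma dYpartial_mul (f g : PowerSeries (Polynomial ℚ)) :
    dYpartial (f * g) = dYpartial f * g + f * dYpartial g := by
  ext k
  simp only [dYpartial, PowerSeries.coeff_mk, PowerSeries.coeff_mul, map_add,
    map_sum, Polynomial.derivative_mul]
  rw [Finset.sum_add_distrib]

lemma factor_eq : (PowerSeries.mk fun k => (Polynomial.X : Polynomial ℚ) ^ (k + 3)) =
    PowerSeries.C (Polynomial.X ^ 2) * Yu := by
  refine PowerSeries.ext fun k => ?_
  simp only [Yu, PowerSeries.coeff_mk, PowerSeries.coeff_C_mul]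
  ring

lemma dYpartial_Yu : dYpartial Yu =
    PowerSeries.mk fun k => (k + 1 : Polynomial ℚ) * Polynomial.X ^ k := by
  ext k
  simp [dYpartial, Yu]

lemma Yu_sq : Yu ^ 2 = PowerSeries.mk fun k =>
    (k + 1 : Polynomial ℚ) * Polynomial.X ^ (k + 2) := by
  refine PowerSeries.ext fun k => ?_
  rw [sq, PowerSeries.coeff_mul]
  simp only [Yu, PowerSeries.coeff_mk]
  have h : ∀ p ∈ Finset.HasAntidiagonal.antidiagonal k,
      (Polynomial.X : Polynomial ℚ) ^ (p.1 + 1) * Polynomial.X ^ (p.2 + 1) =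
        Polynomial.X ^ (k + 2) := by
    intro p hp
    rw [Finset.HasAntidiagonal.mem_antidiagonal] at hp
    rw [← pow_add]
    congr 1
    omega
  rw [Finset.sum_congr rfl h, Finset.sum_const, Finset.Nat.card_antidiagonal,
    nsmul_eq_mul]
  push_cast
  ring

lemma CX2_dYpartial_Yu : PowerSeries.C ((Polynomial.X : Polynomial ℚ) ^ 2) *
    dYpartial Yu = Yu ^ 2 := by
  rw [dYpartial_Yu, Yu_sq]
  refine PowerSeries.ext fun k => ?_
  simp only [PowerSeries.coeff_mk, PowerSeries.coeff_C_mul]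
  ring

lemma dYpartial_Yu_pow (n : ℕ) :
    dYpartial (Yu ^ (n + 1)) = (n + 1 : ℕ) * Yu ^ n * dYpartial Yu := by
  induction n with
  | zero => simp
  | succ n ih =>
    rw [pow_succ, dYpartial_mul, ih]
    push_cast
    ring

lemma Dop_Yu_pow (n : ℕ) :
    Dop (Yu ^ (n + 1)) = (n + 1 : ℕ) * Yu ^ (n + 3) := by
  rw [Dop, dYpartial_Yu_pow, factor_eq]
  have := CX2_dYpartial_Yu
  push_cast
  calc PowerSeries.C (Polynomial.X ^ 2) * Yu *
        ((↑n + 1) * Yu ^ n * dYpartial Yu)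
      = (↑n + 1) * Yu ^ (n + 1) *
        (PowerSeries.C (Polynomial.X ^ 2) * dYpartial Yu) := by ring
    _ = (↑n + 1) * Yu ^ (n + 3) := by rw [this]; ring

lemma Dop_const_mul (c : ℕ) (f : PowerSeries (Polynomial ℚ)) :
    Dop ((c : PowerSeries (Polynomial ℚ)) * f) = c * Dop f := by
  have h : dYpartial ((c : PowerSeries (Polynomial ℚ)) * f) = c * dYpartial f := by
    refine PowerSeries.ext fun k => ?_
    have hc : (c : PowerSeries (Polynomial ℚ)) =
        PowerSeries.C (c : Polynomial ℚ) := by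
      simp [map_natCast]
    rw [hc]
    simp only [dYpartial, PowerSeries.coeff_mk, PowerSeries.coeff_C_mul,
      Polynomial.derivative_mul, Polynomial.derivative_natCast, zero_mul,
      zero_add]
  rw [Dop, h, Dop]
  ring

/-- For every `i ≥ 1`,
`D^i (y/(1-uy)) = (2i-1)!! · (y/(1-uy))^{2i+1}`, where
`(2i-1)!! = ∏_{j<i} (2j+1) = 1·3·5⋯(2i-1)`. -/
theorem Dop_iterate (i : ℕ) (hi : 1 ≤ i) :
    Dop^[i] Yu =
      ((∏ j ∈ Finset.range i, (2 * j + 1) : ℕ) : PowerSeries (Polynomial ℚ)) *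
        Yu ^ (2 * i + 1) := by
  clear hi
  induction i with
  | zero => simp
  | succ i ih =>
    rw [Function.iterate_succ_apply', ih, Dop_const_mul]
    have h2 : 2 * i + 1 = (2 * i) + 1 := rfl
    rw [h2, Dop_Yu_pow]
    rw [Finset.prod_range_succ]
    push_cast
    have : 2 * i + 3 = 2 * (i + 1) + 1 := by ring
    rw [this]
    ring
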